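/- Let π* = (π*₁,…,π*_p) be uniform on (S_n)^p and let x = 1{π*₁(1) = π*₂(1)}. Let ψ be a bijection from a finite multiset β of edges to a multiset of edges of the same size. Then for every submultiset γ ⊊ β: (1) |E[x·∏_{e∈β} 1{Π*₁(e)=Π*₂(ψ(e))}]| ≤ (√2/(n−|{1}∪supp(β)|))^{|{1}∪supp(β)|}, and (2) |E[∏_{e∈β\γ} 1{Π*₁(e)=Π*₂(ψ(e))}]| ≤ (√2/(n−|supp(β\γ)|))^{|supp(β\γ)|}. -/

import Mathlib

open Finset

/-- The set of edges of the complete graph on `Fin n`. -/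
abbrev GraphEdge (n : ℕ) := {e : Sym2 (Fin n) // ¬ e.IsDiag}

/-- Expectation with respect to two independent uniform permutations of `Fin n`. -/
noncomputable def permExpect (n : ℕ)
    (f : Equiv.Perm (Fin n) × Equiv.Perm (Fin n) → ℝ) : ℝ :=
  (∑ σ : Equiv.Perm (Fin n) × Equiv.Perm (Fin n), f σ) /
    (Fintype.card (Equiv.Perm (Fin n) × Equiv.Perm (Fin n)))

/-- Vertices incident to some edge of the (indexed) multiset `a` restricted to `t`. -/
def multisetSupp {n : ℕ} {ι : Type*} [Fintype ι] [DecidableEq ι]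
    (a : ι → GraphEdge n) (t : Finset ι) : Finset (Fin n) :=
  Finset.univ.filter (fun u : Fin n => ∃ i ∈ t, u ∈ (a i).1)


def filt {n : ℕ} {ι : Type*} [Fintype ι] [DecidableEq ι]
    (a : ι → GraphEdge n) (c : ι → Sym2 (Fin n)) (t : Finset ι)
    (D : Finset (Fin n)) (g : Fin n → Fin n) : Finset (Equiv.Perm (Fin n)) :=
  univ.filter fun σ => (∀ u ∈ D, σ u = g u) ∧ ∀ i ∈ t, Sym2.map σ (a i).1 = c i

lemma mem_filt {n : ℕ} {ι : Type*} [Fintype ι] [DecidableEq ι]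
    {a : ι → GraphEdge n} {c : ι → Sym2 (Fin n)} {t : Finset ι}
    {D : Finset (Fin n)} {g : Fin n → Fin n} {σ : Equiv.Perm (Fin n)} :
    σ ∈ filt a c t D g ↔
      (∀ u ∈ D, σ u = g u) ∧ ∀ i ∈ t, Sym2.map σ (a i).1 = c i := by
  simp [filt]

lemma card_perm_fix (n : ℕ) (D : Finset (Fin n)) :
    (univ.filter fun π : Equiv.Perm (Fin n) => ∀ u ∈ D, π u = u).card ≤
      (n - D.card).factorial := by
  rw [← Fintype.card_subtype]
  have e1 : {π : Equiv.Perm (Fin n) // ∀ u ∈ D, π u = u} ≃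
      {f : Equiv.Perm (Fin n) // ∀ a, ¬ (a ∉ D) → f a = a} :=
    Equiv.subtypeEquivRight (fun f => by simp)
  have e2 := (Equiv.Perm.subtypeEquivSubtypePerm (fun a : Fin n => a ∉ D)).symm
  have hcard : Fintype.card {x : Fin n // x ∉ D} = n - D.card := by
    simp [Fintype.card_subtype_compl, Fintype.card_fin]
  have : Fintype.card {π : Equiv.Perm (Fin n) // ∀ u ∈ D, π u = u}
      = Fintype.card (Equiv.Perm {x : Fin n // x ∉ D}) := Fintype.card_congr (e1.trans e2)
  rw [this, Fintype.card_perm, hcard]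

lemma card_perm_agree (n : ℕ) (D : Finset (Fin n)) (g : Fin n → Fin n) :
    (univ.filter fun σ : Equiv.Perm (Fin n) => ∀ u ∈ D, σ u = g u).card ≤
      (n - D.card).factorial := by
  rcases (univ.filter fun σ : Equiv.Perm (Fin n) => ∀ u ∈ D, σ u = g u).eq_empty_or_nonempty
    with h | ⟨σ₀, hσ₀⟩
  · simp [h]
  · simp only [mem_filter, mem_univ, true_and] at hσ₀
    refine le_trans ?_ (card_perm_fix n D)
    apply Finset.card_le_card_of_injOn (fun σ => σ₀⁻¹ * σ)
    · intro σ hσ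
      simp only [coe_filter, Set.mem_setOf_eq, mem_filter, mem_univ, true_and] at hσ ⊢
      intro u hu
      simp [Equiv.Perm.mul_apply, hσ u hu, ← hσ₀ u hu]
    · intro x _ y _ hxy; exact mul_left_cancel hxy

lemma filt_card_le {n : ℕ} {ι : Type*} [Fintype ι] [DecidableEq ι]
    (a : ι → GraphEdge n) (c : ι → Sym2 (Fin n)) (t : Finset ι) :
    ∀ (D : Finset (Fin n)) (g : Fin n → Fin n),
      (filt a c t D g).card ≤
        2 ^ ((multisetSupp a t \ D).card / 2) *
          (n - (D ∪ multisetSupp a t).card).factorial := by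
  induction t using Finset.strongInduction with
  | _ t ih =>
  intro D g
  rcases t.eq_empty_or_nonempty with rfl | ⟨i, hi⟩
  · have hsupp : multisetSupp a (∅ : Finset ι) = ∅ := by simp [multisetSupp]
    rw [hsupp]
    simp only [Finset.empty_sdiff, Finset.card_empty, Nat.zero_div, pow_zero, one_mul,
      Finset.union_empty]
    refine le_trans (Finset.card_le_card ?_) (card_perm_agree n D g)
    intro σ hσ
    simp only [mem_filter, mem_univ, true_and]
    exact (mem_filt.mp hσ).1
  · -- decompose the edge and the target
    obtain ⟨u, v, huv⟩ : ∃ u v, (a i).1 = s(u, v) := ⟨(a i).1.out.1, (a i).1.out.2, by exact (Quot.out_eq _).symm⟩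
    have hne : u ≠ v := by
      have h2 := (a i).2
      rw [huv] at h2
      simpa [Sym2.mk_isDiag_iff] using h2
    obtain ⟨x, y, hxy⟩ : ∃ x y, c i = s(x, y) := ⟨(c i).out.1, (c i).out.2, by exact (Quot.out_eq _).symm⟩
    set t' := t.erase i with ht'def
    have ht' : t' ⊂ t := Finset.erase_ssubset hi
    set D' := insert u (insert v D) with hD'def
    have hmem : ∀ w, w ∈ multisetSupp a t ↔ w = u ∨ w = v ∨ w ∈ multisetSupp a t' := by
      intro w
      simp only [multisetSupp, mem_filter, mem_univ, true_and, ht'def, mem_erase]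
      constructor
      · rintro ⟨j, hj, hw⟩
        by_cases hji : j = i
        · subst hji
          rw [huv] at hw
          rcases Sym2.mem_iff.mp hw with h | h
          · exact Or.inl h
          · exact Or.inr (Or.inl h)
        · exact Or.inr (Or.inr ⟨j, ⟨hji, hj⟩, hw⟩)
      · rintro (rfl | rfl | ⟨j, ⟨hji, hj⟩, hw⟩)
        · exact ⟨i, hi, by rw [huv]; simp⟩
        · exact ⟨i, hi, by rw [huv]; simp⟩
        · exact ⟨j, hj, hw⟩
    have hset : D' ∪ multisetSupp a t' = D ∪ multisetSupp a t := by
      ext w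
      simp only [mem_union, hD'def, mem_insert, hmem w]
      tauto
    have hsd : multisetSupp a t' \ D' = (multisetSupp a t \ D) \ {u, v} := by
      ext w
      simp only [mem_sdiff, hD'def, mem_insert, mem_singleton, hmem w]
      tauto
    -- abbreviations
    set m := (multisetSupp a t \ D).card with hmdef
    set F := (n - (D ∪ multisetSupp a t).card).factorial with hFdef
    -- the key membership step
    have key : ∀ (x' y' : Fin n) (σ : Equiv.Perm (Fin n)), σ ∈ filt a c t D g →
        σ u = x' → σ v = y' →
        σ ∈ filt a c t' D' (Function.update (Function.update g v y') u x') := by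
      intro x' y' σ hσ h1 h2
      obtain ⟨hD, hC⟩ := mem_filt.mp hσ
      refine mem_filt.mpr ⟨?_, fun j hj => hC j (Finset.mem_of_mem_erase hj)⟩
      intro w hw
      by_cases hwu : w = u
      · subst hwu
        rw [Function.update_self]
        exact h1
      · by_cases hwv : w = v
        · subst hwv
          rw [Function.update_of_ne (Ne.symm hne), Function.update_self]
          exact h2
        · rw [Function.update_of_ne hwu, Function.update_of_ne hwv]
          rcases mem_insert.mp hw with h | h
          · exact absurd h hwu
          · rcases mem_insert.mp h with h' | h'
            · exact absurd h' hwv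
            · exact hD w h'
    set g₁ := Function.update (Function.update g v y) u x with hg1
    set g₂ := Function.update (Function.update g v x) u y with hg2
    set A₁ := filt a c t D g ∩ filt a c t' D' g₁ with hA1
    set A₂ := filt a c t D g ∩ filt a c t' D' g₂ with hA2
    have hsub : filt a c t D g ⊆ A₁ ∪ A₂ := by
      intro σ hσ
      have hC := (mem_filt.mp hσ).2 i hi
      rw [huv, hxy, Sym2.map_pair_eq, Sym2.eq_iff] at hC
      rcases hC with ⟨h1, h2⟩ | ⟨h1, h2⟩
      · exact mem_union_left _ (mem_inter.mpr ⟨hσ, key x y σ hσ h1 h2⟩)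
      · exact mem_union_right _ (mem_inter.mpr ⟨hσ, key y x σ hσ h1 h2⟩)
    have hcard : (filt a c t D g).card ≤ A₁.card + A₂.card :=
      le_trans (card_le_card hsub) (card_union_le _ _)
    set m' := (multisetSupp a t' \ D').card with hm'def
    have hb1 : A₁.card ≤ 2 ^ (m' / 2) * F := by
      refine le_trans (card_le_card inter_subset_right) ?_
      have h := ih t' ht' D' g₁
      rwa [hset] at h
    have hb2 : A₂.card ≤ 2 ^ (m' / 2) * F := by
      refine le_trans (card_le_card inter_subset_right) ?_
      have h := ih t' ht' D' g₂
      rwa [hset] at h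
    have hm'le : m' ≤ m := by
      rw [hm'def, hsd]
      exact card_le_card sdiff_subset
    by_cases hxyne : x = y
    · have hempty : filt a c t D g = ∅ := by
        apply Finset.eq_empty_of_forall_notMem
        intro σ hσ
        have hC := (mem_filt.mp hσ).2 i hi
        rw [huv, hxy, Sym2.map_pair_eq, Sym2.eq_iff] at hC
        subst hxyne
        rcases hC with ⟨h1, h2⟩ | ⟨h1, h2⟩ <;>
          exact hne (σ.injective (h1.trans h2.symm))
      simp [hempty]
    · by_cases hDuv : u ∈ D ∨ v ∈ D
      · have hone : A₁ = ∅ ∨ A₂ = ∅ := by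
          rcases hDuv with hu | hv
          · by_cases hgu : g u = x
            · right
              apply Finset.eq_empty_of_forall_notMem
              intro σ hσ
              obtain ⟨hl, hr⟩ := mem_inter.mp hσ
              have e1 : σ u = g u := (mem_filt.mp hl).1 u hu
              have e2 : σ u = y := by
                have h := (mem_filt.mp hr).1 u (mem_insert_self u _)
                rw [hg2] at h
                rwa [Function.update_self] at h
              exact hxyne (by rw [← hgu, ← e1, e2])
            · left
              apply Finset.eq_empty_of_forall_notMem
              intro σ hσ
              obtain ⟨hl, hr⟩ := mem_inter.mp hσ
              have e1 : σ u = g u := (mem_filt.mp hl).1 u hu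
              have e2 : σ u = x := by
                have h := (mem_filt.mp hr).1 u (mem_insert_self u _)
                rw [hg1] at h
                rwa [Function.update_self] at h
              exact hgu (e1.symm.trans e2)
          · by_cases hgv : g v = y
            · right
              apply Finset.eq_empty_of_forall_notMem
              intro σ hσ
              obtain ⟨hl, hr⟩ := mem_inter.mp hσ
              have e1 : σ v = g v := (mem_filt.mp hl).1 v hv
              have e2 : σ v = x := by
                have h := (mem_filt.mp hr).1 v (mem_insert_of_mem (mem_insert_self v _))
                rw [hg2] at h
                rwa [Function.update_of_ne (Ne.symm hne), Function.update_self] at h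
              exact hxyne (by rw [← e2, e1, hgv])
            · left
              apply Finset.eq_empty_of_forall_notMem
              intro σ hσ
              obtain ⟨hl, hr⟩ := mem_inter.mp hσ
              have e1 : σ v = g v := (mem_filt.mp hl).1 v hv
              have e2 : σ v = y := by
                have h := (mem_filt.mp hr).1 v (mem_insert_of_mem (mem_insert_self v _))
                rw [hg1] at h
                rwa [Function.update_of_ne (Ne.symm hne), Function.update_self] at h
              exact hgv (e1.symm.trans e2)
        have hstep : (filt a c t D g).card ≤ 2 ^ (m' / 2) * F := by
          rcases hone with h | h
          · rw [h] at hcard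
            simp only [Finset.card_empty, Nat.zero_add] at hcard
            exact le_trans hcard hb2
          · rw [h] at hcard
            simp only [Finset.card_empty, Nat.add_zero] at hcard
            exact le_trans hcard hb1
        refine le_trans hstep ?_
        exact Nat.mul_le_mul_right _
          (Nat.pow_le_pow_right (by norm_num) (Nat.div_le_div_right hm'le))
      · push_neg at hDuv
        have huS : u ∈ multisetSupp a t \ D :=
          mem_sdiff.mpr ⟨(hmem u).mpr (Or.inl rfl), hDuv.1⟩
        have hvS : v ∈ multisetSupp a t \ D :=
          mem_sdiff.mpr ⟨(hmem v).mpr (Or.inr (Or.inl rfl)), hDuv.2⟩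
        have hpair : {u, v} ⊆ multisetSupp a t \ D := by
          intro w hw
          rcases mem_insert.mp hw with rfl | hw'
          · exact huS
          · rw [mem_singleton.mp hw']
            exact hvS
        have hm2 : m = m' + 2 := by
          have e1 : m' = m - 2 := by
            rw [hm'def, hsd, card_sdiff_of_subset hpair, Finset.card_pair hne]
          have e2 : 2 ≤ m := by
            calc 2 = ({u, v} : Finset (Fin n)).card := (Finset.card_pair hne).symm
              _ ≤ m := card_le_card hpair
          omega
        calc (filt a c t D g).card ≤ A₁.card + A₂.card := hcard
          _ ≤ 2 ^ (m' / 2) * F + 2 ^ (m' / 2) * F := Nat.add_le_add hb1 hb2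
          _ = 2 ^ (m' / 2 + 1) * F := by ring
          _ = 2 ^ (m / 2) * F := by
              congr 2
              omega

lemma fac_bound (n : ℕ) : ∀ k, k ≤ n → (n - k) ^ k * (n - k).factorial ≤ n.factorial := by
  intro k
  induction k with
  | zero => simp
  | succ k ihk =>
    intro hk1
    have hk : k ≤ n := by omega
    have h1 : n - k = (n - (k + 1)) + 1 := by omega
    have step1 : (n - (k + 1)) ^ (k + 1) * (n - (k + 1)).factorial ≤
        (n - k) ^ k * (n - k).factorial := by
      calc (n - (k + 1)) ^ (k + 1) * (n - (k + 1)).factorial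
          = (n - (k + 1)) ^ k * ((n - (k + 1)) * (n - (k + 1)).factorial) := by ring
        _ ≤ (n - k) ^ k * ((n - (k + 1) + 1) * (n - (k + 1)).factorial) :=
            Nat.mul_le_mul (Nat.pow_le_pow_left (by omega) k)
              (Nat.mul_le_mul_right _ (by omega))
        _ = (n - k) ^ k * (n - k).factorial := by rw [h1, Nat.factorial_succ]
    exact le_trans step1 (ihk hk)

lemma expect_le (n k : ℕ) (hk : k < n)
    (f : Equiv.Perm (Fin n) × Equiv.Perm (Fin n) → ℝ)
    (hf0 : ∀ σ, 0 ≤ f σ)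
    (hsum : ∑ σ : Equiv.Perm (Fin n) × Equiv.Perm (Fin n), f σ ≤
      (n.factorial : ℝ) * ((2 : ℝ) ^ (k / 2) * ((n - k).factorial : ℝ))) :
    |permExpect n f| ≤ (Real.sqrt 2 / ((n : ℝ) - k)) ^ k := by
  have hfacpos : (0 : ℝ) < (n.factorial : ℝ) := by positivity
  have hnk1 : 1 ≤ n - k := by omega
  have hnkpos : (0 : ℝ) < ((n - k : ℕ) : ℝ) := by exact_mod_cast Nat.lt_of_lt_of_le Nat.zero_lt_one hnk1
  have hcast : ((n : ℝ) - k) = ((n - k : ℕ) : ℝ) := by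
    rw [Nat.cast_sub hk.le]
  have hC : ((Fintype.card (Equiv.Perm (Fin n) × Equiv.Perm (Fin n)) : ℕ) : ℝ)
      = (n.factorial : ℝ) ^ 2 := by
    rw [Fintype.card_prod, Fintype.card_perm, Fintype.card_fin]
    push_cast
    ring
  have h0 : 0 ≤ permExpect n f := by
    apply div_nonneg (Finset.sum_nonneg fun σ _ => hf0 σ)
    positivity
  rw [abs_of_nonneg h0]
  have hsqrt1 : (1 : ℝ) ≤ Real.sqrt 2 := by
    nlinarith [Real.sq_sqrt (by norm_num : (0:ℝ) ≤ 2), Real.sqrt_nonneg 2]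
  have key1 : (2 : ℝ) ^ (k / 2) ≤ Real.sqrt 2 ^ k := by
    calc (2 : ℝ) ^ (k / 2) = (Real.sqrt 2 ^ 2) ^ (k / 2) := by
          rw [Real.sq_sqrt (by norm_num : (0:ℝ) ≤ 2)]
      _ = Real.sqrt 2 ^ (2 * (k / 2)) := by rw [← pow_mul]
      _ ≤ Real.sqrt 2 ^ k := pow_le_pow_right₀ hsqrt1 (by omega)
  have key2 : ((n - k).factorial : ℝ) * ((n - k : ℕ) : ℝ) ^ k ≤ (n.factorial : ℝ) := by
    exact_mod_cast (by rw [Nat.mul_comm]; exact fac_bound n k hk.le :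
      (n - k).factorial * (n - k) ^ k ≤ n.factorial)
  have hfacne : (n.factorial : ℝ) ≠ 0 := ne_of_gt hfacpos
  calc permExpect n f
      = (∑ σ : Equiv.Perm (Fin n) × Equiv.Perm (Fin n), f σ) / ((n.factorial : ℝ) ^ 2) := by
        rw [permExpect, hC]
    _ ≤ ((n.factorial : ℝ) * ((2 : ℝ) ^ (k / 2) * ((n - k).factorial : ℝ))) /
          ((n.factorial : ℝ) ^ 2) := by
        apply div_le_div_of_nonneg_right hsum
        positivity
    _ = ((2 : ℝ) ^ (k / 2) * ((n - k).factorial : ℝ)) / (n.factorial : ℝ) := by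
        rw [sq, mul_div_mul_left _ _ hfacne]
    _ ≤ (Real.sqrt 2 ^ k) / (((n - k : ℕ) : ℝ) ^ k) := by
        rw [div_le_div_iff₀ hfacpos (by positivity)]
        calc (2 : ℝ) ^ (k / 2) * ((n - k).factorial : ℝ) * ((n - k : ℕ) : ℝ) ^ k
            = (2 : ℝ) ^ (k / 2) * (((n - k).factorial : ℝ) * ((n - k : ℕ) : ℝ) ^ k) := by ring
          _ ≤ Real.sqrt 2 ^ k * (n.factorial : ℝ) :=
              mul_le_mul key1 key2 (by positivity) (by positivity)
    _ = (Real.sqrt 2 / ((n : ℝ) - k)) ^ k := by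
        rw [div_pow, hcast]

theorem moment_bounds
    (n : ℕ) (hn : 0 < n)
    {ι : Type*} [Fintype ι] [DecidableEq ι]
    (a b : ι → GraphEdge n)
    (hsupp : (insert (⟨0, hn⟩ : Fin n) (multisetSupp a Finset.univ)).card < n) :
    (|permExpect n (fun σ =>
        (if σ.1 ⟨0, hn⟩ = σ.2 ⟨0, hn⟩ then (1 : ℝ) else 0) *
          ∏ i : ι, (if Sym2.map σ.1 (a i).1 = Sym2.map σ.2 (b i).1
            then (1 : ℝ) else 0))| ≤
      (Real.sqrt 2 /
          ((n : ℝ) - (insert (⟨0, hn⟩ : Fin n) (multisetSupp a Finset.univ)).card)) ^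
        (insert (⟨0, hn⟩ : Fin n) (multisetSupp a Finset.univ)).card)
    ∧ ∀ t : Finset ι, t.Nonempty →
      |permExpect n (fun σ =>
          ∏ i ∈ t, (if Sym2.map σ.1 (a i).1 = Sym2.map σ.2 (b i).1
            then (1 : ℝ) else 0))| ≤
        (Real.sqrt 2 / ((n : ℝ) - (multisetSupp a t).card)) ^ (multisetSupp a t).card := by
  classical
  set v0 : Fin n := (⟨0, hn⟩ : Fin n) with hv0
  have sum_ind : ∀ (S : Finset (Equiv.Perm (Fin n))),
      (∑ σ1 : Equiv.Perm (Fin n), (if σ1 ∈ S then (1 : ℝ) else 0)) = (S.card : ℝ) := by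
    intro S
    rw [Finset.sum_ite_mem, Finset.univ_inter, Finset.sum_const, nsmul_eq_mul, mul_one]
  constructor
  · -- Part 1
    set K := (insert v0 (multisetSupp a Finset.univ)).card with hKdef
    apply expect_le n K hsupp
    · intro σ
      apply mul_nonneg
      · split <;> norm_num
      · apply Finset.prod_nonneg
        intro i _
        split <;> norm_num
    · rw [Fintype.sum_prod_type_right]
      have inner : ∀ σ2 : Equiv.Perm (Fin n),
          (∑ σ1 : Equiv.Perm (Fin n),
            (if σ1 v0 = σ2 v0 then (1 : ℝ) else 0) *
              ∏ i : ι, (if Sym2.map σ1 (a i).1 = Sym2.map σ2 (b i).1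
                then (1 : ℝ) else 0)) ≤
          ((2 ^ (K / 2) * (n - K).factorial : ℕ) : ℝ) := by
        intro σ2
        set S := filt a (fun i => Sym2.map σ2 (b i).1) Finset.univ
          ({v0} : Finset (Fin n)) (fun _ => σ2 v0) with hSdef
        have e1 : ∀ σ1 : Equiv.Perm (Fin n),
            (if σ1 v0 = σ2 v0 then (1 : ℝ) else 0) *
              ∏ i : ι, (if Sym2.map σ1 (a i).1 = Sym2.map σ2 (b i).1
                then (1 : ℝ) else 0) =
            if σ1 ∈ S then (1 : ℝ) else 0 := by
          intro σ1
          by_cases h : σ1 ∈ S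
          · rw [if_pos h]
            obtain ⟨h1, h2⟩ := mem_filt.mp h
            rw [if_pos (h1 v0 (Finset.mem_singleton_self v0)), one_mul]
            apply Finset.prod_eq_one
            intro i hi
            rw [if_pos (h2 i hi)]
          · rw [if_neg h]
            by_cases h1 : σ1 v0 = σ2 v0
            · have h2 : ∃ i ∈ (Finset.univ : Finset ι),
                  ¬ (Sym2.map σ1 (a i).1 = Sym2.map σ2 (b i).1) := by
                by_contra hc
                push_neg at hc
                refine h (mem_filt.mpr ⟨?_, hc⟩)
                intro u hu
                rw [Finset.mem_singleton.mp hu]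
                exact h1
              obtain ⟨i, hi, hni⟩ := h2
              have hz : (∏ i : ι, (if Sym2.map σ1 (a i).1 = Sym2.map σ2 (b i).1
                  then (1 : ℝ) else 0)) = 0 := Finset.prod_eq_zero hi (if_neg hni)
              rw [hz, mul_zero]
            · rw [if_neg h1, zero_mul]
        calc (∑ σ1 : Equiv.Perm (Fin n),
              (if σ1 v0 = σ2 v0 then (1 : ℝ) else 0) *
                ∏ i : ι, (if Sym2.map σ1 (a i).1 = Sym2.map σ2 (b i).1
                  then (1 : ℝ) else 0))
            = (S.card : ℝ) := by
              rw [Finset.sum_congr rfl (fun σ1 _ => e1 σ1), sum_ind]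
          _ ≤ ((2 ^ (K / 2) * (n - K).factorial : ℕ) : ℝ) := by
              have h := filt_card_le a (fun i => Sym2.map σ2 (b i).1) Finset.univ
                ({v0} : Finset (Fin n)) (fun _ => σ2 v0)
              have hUn : ({v0} : Finset (Fin n)) ∪ multisetSupp a Finset.univ =
                  insert v0 (multisetSupp a Finset.univ) :=
                (Finset.insert_eq v0 (multisetSupp a Finset.univ)).symm
              rw [hUn] at h
              have hmle : (multisetSupp a Finset.univ \ {v0}).card ≤ K := by
                apply Finset.card_le_card
                intro w hw
                exact Finset.mem_insert_of_mem (Finset.mem_sdiff.mp hw).1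
              have h2 : S.card ≤ 2 ^ (K / 2) * (n - K).factorial :=
                le_trans h (Nat.mul_le_mul_right _
                  (Nat.pow_le_pow_right (by norm_num) (Nat.div_le_div_right hmle)))
              exact_mod_cast h2
      calc (∑ σ2 : Equiv.Perm (Fin n), ∑ σ1 : Equiv.Perm (Fin n),
            (if σ1 v0 = σ2 v0 then (1 : ℝ) else 0) *
              ∏ i : ι, (if Sym2.map σ1 (a i).1 = Sym2.map σ2 (b i).1
                then (1 : ℝ) else 0))
          ≤ ∑ _σ2 : Equiv.Perm (Fin n), ((2 ^ (K / 2) * (n - K).factorial : ℕ) : ℝ) :=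
            Finset.sum_le_sum (fun σ2 _ => inner σ2)
        _ = (Fintype.card (Equiv.Perm (Fin n)) : ℝ) *
              ((2 ^ (K / 2) * (n - K).factorial : ℕ) : ℝ) := by
            rw [Finset.sum_const, nsmul_eq_mul, Finset.card_univ]
        _ = (n.factorial : ℝ) * ((2 : ℝ) ^ (K / 2) * ((n - K).factorial : ℝ)) := by
            rw [Fintype.card_perm, Fintype.card_fin]
            push_cast
            ring
  · -- Part 2
    intro t _
    set k := (multisetSupp a t).card with hkdef
    have hsub : multisetSupp a t ⊆ insert v0 (multisetSupp a Finset.univ) := by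
      intro w hw
      apply Finset.mem_insert_of_mem
      simp only [multisetSupp, Finset.mem_filter, Finset.mem_univ, true_and] at hw ⊢
      obtain ⟨j, _, hj⟩ := hw
      exact ⟨j, hj⟩
    have hkn : k < n := lt_of_le_of_lt (Finset.card_le_card hsub) hsupp
    apply expect_le n k hkn
    · intro σ
      apply Finset.prod_nonneg
      intro i _
      split <;> norm_num
    · rw [Fintype.sum_prod_type_right]
      have inner : ∀ σ2 : Equiv.Perm (Fin n),
          (∑ σ1 : Equiv.Perm (Fin n),
            ∏ i ∈ t, (if Sym2.map σ1 (a i).1 = Sym2.map σ2 (b i).1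
              then (1 : ℝ) else 0)) ≤
          ((2 ^ (k / 2) * (n - k).factorial : ℕ) : ℝ) := by
        intro σ2
        set S := filt a (fun i => Sym2.map σ2 (b i).1) t (∅ : Finset (Fin n))
          (fun w => w) with hSdef
        have e1 : ∀ σ1 : Equiv.Perm (Fin n),
            (∏ i ∈ t, (if Sym2.map σ1 (a i).1 = Sym2.map σ2 (b i).1
              then (1 : ℝ) else 0)) =
            if σ1 ∈ S then (1 : ℝ) else 0 := by
          intro σ1
          by_cases h : σ1 ∈ S
          · rw [if_pos h]
            apply Finset.prod_eq_one
            intro i hi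
            rw [if_pos ((mem_filt.mp h).2 i hi)]
          · rw [if_neg h]
            have h2 : ∃ i ∈ t,
                ¬ (Sym2.map σ1 (a i).1 = Sym2.map σ2 (b i).1) := by
              by_contra hc
              push_neg at hc
              exact h (mem_filt.mpr ⟨fun u hu => absurd hu (Finset.notMem_empty u), hc⟩)
            obtain ⟨i, hi, hni⟩ := h2
            exact Finset.prod_eq_zero hi (if_neg hni : (if Sym2.map σ1 (a i).1 = Sym2.map σ2 (b i).1 then (1 : ℝ) else 0) = 0)
        calc (∑ σ1 : Equiv.Perm (Fin n),
              ∏ i ∈ t, (if Sym2.map σ1 (a i).1 = Sym2.map σ2 (b i).1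
                then (1 : ℝ) else 0))
            = (S.card : ℝ) := by
              rw [Finset.sum_congr rfl (fun σ1 _ => e1 σ1), sum_ind]
          _ ≤ ((2 ^ (k / 2) * (n - k).factorial : ℕ) : ℝ) := by
              have h := filt_card_le a (fun i => Sym2.map σ2 (b i).1) t
                (∅ : Finset (Fin n)) (fun w => w)
              rw [Finset.sdiff_empty, Finset.empty_union] at h
              exact_mod_cast h
      calc (∑ σ2 : Equiv.Perm (Fin n), ∑ σ1 : Equiv.Perm (Fin n),
            ∏ i ∈ t, (if Sym2.map σ1 (a i).1 = Sym2.map σ2 (b i).1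
              then (1 : ℝ) else 0))
          ≤ ∑ _σ2 : Equiv.Perm (Fin n), ((2 ^ (k / 2) * (n - k).factorial : ℕ) : ℝ) :=
            Finset.sum_le_sum (fun σ2 _ => inner σ2)
        _ = (Fintype.card (Equiv.Perm (Fin n)) : ℝ) *
              ((2 ^ (k / 2) * (n - k).factorial : ℕ) : ℝ) := by
            rw [Finset.sum_const, nsmul_eq_mul, Finset.card_univ]
        _ = (n.factorial : ℝ) * ((2 : ℝ) ^ (k / 2) * ((n - k).factorial : ℝ)) := by
            rw [Fintype.card_perm, Fintype.card_fin]
            push_cast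
            ring
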